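/- Let r ≥ 0 and ℓ > 3^r be integers. Consider a family 𝒯 = {T₁,…,T_m} of disjoint rainbow independent sets in a coloured matroid, and define families 𝒯⁽⁰⁾,…,𝒯⁽ʳ⁾ by 𝒯⁽⁰⁾ = 𝒯 and 𝒯⁽ⁱ⁾ the ℓ-reduction of 𝒯⁽ⁱ⁻¹⁾ for i = 1,…,r. Suppose there is an element e ∉ T₁ ∪ … ∪ T_m of the matroid such that T ∪ {e} is a rainbow independent set for some T ∈ 𝒯⁽ⁱ⁾ for some i ∈ {0,…,r}. Then there exists a family 𝒮 = {S₁,…,S_m} of disjoint rainbow independent sets with S₁ ∪ … ∪ S_m = (T₁ ∪ … ∪ T_m) ∪ {e} and Σ_{j=1}^{m} |S_j \ T_j| ≤ 3^r. -/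

import Mathlib

open Set


/-- A rainbow independent set: independent, with pairwise distinct colours. -/
def RainbowIndep {α κ : Type*} (M : Matroid α) (c : α → κ) (S : Set α) : Prop :=
  M.Indep S ∧ Set.InjOn c S

/-- The `ℓ`-reduction of a family of disjoint rainbow independent sets: delete every
covered element `x` for which there exist `ℓ` different members `T` of the family with
`x ∉ T` such that `T ∪ {x}` is a rainbow independent set. -/
def reduce {α κ : Type*} (M : Matroid α) (c : α → κ) (ℓ : ℕ) {m : ℕ}
    (T : Fin m → Set α) : Fin m → Set α :=
  fun j => {x ∈ T j |
    {i : Fin m | x ∉ T i ∧ RainbowIndep M c (insert x (T i))}.ncard < ℓ}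

lemma RainbowIndep.subset {α κ : Type*} {M : Matroid α} {c : α → κ} {S T : Set α}
    (h : RainbowIndep M c S) (hTS : T ⊆ S) : RainbowIndep M c T :=
  ⟨h.1.subset hTS, h.2.mono hTS⟩

/-- per-set repair lemma -/
lemma repair {α κ : Type*} (M : Matroid α) [M.Finite] (c : α → κ) (A R' S' : Set α)
    (hA : RainbowIndep M c A) (hR' : R' ⊆ A) (hS' : RainbowIndep M c S')
    (hdisj : Disjoint S' (A \ R')) :
    ∃ B : Set α, S' ⊆ B ∧ B ⊆ S' ∪ (A \ R') ∧ RainbowIndep M c B ∧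
      ((S' ∪ (A \ R')) \ B).ncard ≤ 2 * (S' \ R').ncard := by
  classical
  set D := A \ R' with hD
  set Y := S' \ R' with hY
  have hAfin : A.Finite := M.set_finite A hA.1.subset_ground
  have hS'fin : S'.Finite := M.set_finite S' hS'.1.subset_ground
  have hYfin : Y.Finite := hS'fin.subset diff_subset
  have hDfin : D.Finite := hAfin.subset diff_subset
  set E₁ : Set α := {x ∈ D | c x ∈ c '' Y} with hE₁
  have hE₁D : E₁ ⊆ D := sep_subset _ _
  have hE₁card : E₁.ncard ≤ Y.ncard := by
    have hinj : Set.InjOn c E₁ := hA.2.mono (hE₁D.trans diff_subset)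
    calc E₁.ncard = (c '' E₁).ncard := (Set.ncard_image_of_injOn hinj).symm
    _ ≤ (c '' Y).ncard := by
        refine Set.ncard_le_ncard ?_ (hYfin.image c)
        rintro _ ⟨x, hx, rfl⟩; exact hx.2
    _ ≤ Y.ncard := Set.ncard_image_le hYfin
  set U : Set α := S' ∪ (D \ E₁) with hU
  have hUE : U ⊆ M.E := union_subset hS'.1.subset_ground
    ((diff_subset.trans diff_subset).trans hA.1.subset_ground)
  have hUfin : U.Finite := hS'fin.union (hDfin.subset diff_subset)
  have hUinj : Set.InjOn c U := by
    rintro x hx y hy hxy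
    rcases hx with hx | hx
    · rcases hy with hy | hy
      · exact hS'.2 hx hy hxy
      · by_cases hxR : x ∈ R'
        · exact hA.2 (hR' hxR) (diff_subset (diff_subset hy)) hxy
        · exact absurd ⟨hy.1, ⟨x, ⟨hx, hxR⟩, hxy⟩⟩ hy.2
    · rcases hy with hy | hy
      · by_cases hyR : y ∈ R'
        · exact hA.2 (diff_subset (diff_subset hx)) (hR' hyR) hxy
        · exact absurd ⟨hx.1, ⟨y, ⟨hy, hyR⟩, hxy.symm⟩⟩ hx.2
      · exact hA.2 (diff_subset (diff_subset hx)) (diff_subset (diff_subset hy)) hxy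
  set J : Set α := (S' ∩ R') ∪ (D \ E₁) with hJdef
  have hJA : J ⊆ A := union_subset (inter_subset_right.trans hR')
    (diff_subset.trans diff_subset)
  have hJ : M.Indep J := hA.1.subset hJA
  have hJU : J ⊆ U := union_subset ((inter_subset_left).trans subset_union_left) subset_union_right
  obtain ⟨B, hBbasis, hS'B⟩ := (hS'.1 : M.Indep S').subset_isBasis_of_subset subset_union_left hUE
  obtain ⟨B', hB'basis, hJB'⟩ := hJ.subset_isBasis_of_subset hJU hUE
  have hBU : B ⊆ U := hBbasis.subset
  have hBfin : B.Finite := hUfin.subset hBU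
  have hJcard : J.ncard ≤ B.ncard := by
    have h1 : B'.encard = B.encard := hB'basis.encard_eq_encard hBbasis
    have h2 : J.encard ≤ B'.encard := Set.encard_le_encard hJB'
    have h3 : J.encard ≤ B.encard := h1 ▸ h2
    rw [Set.ncard_def, Set.ncard_def]
    exact ENat.toNat_le_toNat h3 hBfin.encard_lt_top.ne
  -- cardinality of U = J + Y
  have hJYdisj : Disjoint J Y := by
    rw [Set.disjoint_left]
    rintro x (⟨-, hxR⟩ | ⟨hxD, -⟩) hxY
    · exact hxY.2 hxR
    · exact (hdisj.le_bot ⟨hxY.1, hxD⟩)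
  have hJY : J ∪ Y = U := by
    rw [hJdef, hU, hY, union_right_comm, inter_union_diff]
  have hUcard : U.ncard = J.ncard + Y.ncard := by
    rw [← hJY, Set.ncard_union_eq hJYdisj (hUfin.subset hJU) hYfin]
  have hUB : (U \ B).ncard ≤ Y.ncard := by
    have h4 := Set.ncard_diff hBU hBfin
    omega
  refine ⟨B, hS'B, hBU.trans (union_subset_union_right _ diff_subset),
    ⟨hBbasis.indep, hUinj.mono hBU⟩, ?_⟩
  have hsub : (S' ∪ D) \ B ⊆ E₁ ∪ (U \ B) := by
    rintro x ⟨hx, hxB⟩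
    by_cases hxE : x ∈ E₁
    · exact Or.inl hxE
    · refine Or.inr ⟨?_, hxB⟩
      rcases hx with h | h
      · exact Or.inl h
      · exact Or.inr ⟨h, hxE⟩
  calc ((S' ∪ D) \ B).ncard ≤ (E₁ ∪ (U \ B)).ncard :=
        Set.ncard_le_ncard hsub ((hDfin.subset hE₁D).union (hUfin.subset diff_subset))
    _ ≤ E₁.ncard + (U \ B).ncard := Set.ncard_union_le _ _
    _ ≤ Y.ncard + Y.ncard := add_le_add hE₁card hUB
    _ = 2 * Y.ncard := (two_mul _).symm

lemma ncard_biUnion_le' {α ι : Type*} (s : Finset ι) (A : ι → Set α) :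
    (⋃ k ∈ s, A k).ncard ≤ ∑ k ∈ s, (A k).ncard := by
  classical
  induction s using Finset.induction_on with
  | empty => simp
  | @insert a s' hx ih =>
    rw [Finset.set_biUnion_insert, Finset.sum_insert hx]
    exact le_trans (Set.ncard_union_le _ _) (by omega)

lemma sum_ncard_le_ncard_biUnion' {α ι : Type*} (s : Finset ι) (A : ι → Set α)
    (hfin : ∀ k, (A k).Finite) (hdisj : ∀ a b, a ≠ b → Disjoint (A a) (A b)) :
    ∑ k ∈ s, (A k).ncard ≤ (⋃ k ∈ s, A k).ncard := by
  classical
  induction s using Finset.induction_on with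
  | empty => simp
  | @insert a s' hx ih =>
    rw [Finset.set_biUnion_insert, Finset.sum_insert hx]
    have hd : Disjoint (A a) (⋃ k ∈ s', A k) := by
      rw [Set.disjoint_iUnion_right]
      intro k
      rw [Set.disjoint_iUnion_right]
      intro hk
      exact hdisj a k (fun h => hx (h ▸ hk))
    rw [Set.ncard_union_eq hd (hfin a) (Set.Finite.biUnion (Finset.finite_toSet s') (fun k _ => hfin k))]
    omega

lemma ncard_iUnion_le'' {α : Type*} {m : ℕ} (A : Fin m → Set α) :
    (⋃ k, A k).ncard ≤ ∑ k, (A k).ncard := by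
  have := ncard_biUnion_le' Finset.univ A
  simpa using this

lemma sum_ncard_le_ncard_iUnion'' {α : Type*} {m : ℕ} (A : Fin m → Set α)
    (hfin : ∀ k, (A k).Finite) (hdisj : ∀ a b, a ≠ b → Disjoint (A a) (A b)) :
    ∑ k, (A k).ncard ≤ (⋃ k, A k).ncard := by
  have := sum_ncard_le_ncard_biUnion' Finset.univ A hfin hdisj
  simpa using this

lemma key {α κ : Type*} (M : Matroid α) [M.Finite] (c : α → κ) (ℓ : ℕ) {m : ℕ} (i : ℕ) :
    ∀ (_ : 3 ^ i ≤ ℓ) (T : Fin m → Set α) (_ : ∀ k, RainbowIndep M c (T k))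
      (_ : ∀ a b, a ≠ b → Disjoint (T a) (T b)) (e : α) (_ : e ∈ M.E)
      (_ : e ∉ ⋃ k, T k) (j : Fin m)
      (_ : RainbowIndep M c (insert e ((reduce M c ℓ)^[i] T j))),
    ∃ S : Fin m → Set α, (∀ k, RainbowIndep M c (S k)) ∧
      (∀ a b, a ≠ b → Disjoint (S a) (S b)) ∧
      (⋃ k, S k) = (⋃ k, T k) ∪ {e} ∧
      (∑ k, (S k \ T k).ncard ≤ 3 ^ i) ∧ {k | S k ≠ T k}.ncard ≤ 3 ^ i := by
  induction i with
  | zero =>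
    intro hl T hTri hTdisj e he heT j hj
    classical
    rw [Function.iterate_zero_apply] at hj
    have henotT : ∀ k, e ∉ T k := fun k hk => heT (Set.mem_iUnion.2 ⟨k, hk⟩)
    set S0 : Fin m → Set α := fun k => if k = j then insert e (T j) else T k with hS0def
    have hS0j : S0 j = insert e (T j) := if_pos rfl
    have hS0k : ∀ k, k ≠ j → S0 k = T k := fun k hk => if_neg hk
    have hsub : ∀ k, S0 k ⊆ insert e (T k) := by
      intro k x hx
      by_cases h : k = j
      · subst h; rw [hS0j] at hx; exact hx
      · rw [hS0k k h] at hx; exact Or.inr hx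
    refine ⟨S0, ?_, ?_, ?_, ?_, ?_⟩
    · intro k
      by_cases h : k = j
      · subst h; rw [hS0j]; exact hj
      · rw [hS0k k h]; exact hTri k
    · intro a b hab
      have hemem : ∀ k, e ∈ S0 k → k = j := by
        intro k hk
        by_contra h
        rw [hS0k k h] at hk
        exact henotT k hk
      rw [Set.disjoint_left]
      intro x hxa hxb
      rcases hsub a hxa with rfl | hxa'
      · rcases hsub b hxb with h | hxb'
        · exact hab ((hemem a hxa).trans (hemem b hxb).symm)
        · exact henotT b hxb'
      · rcases hsub b hxb with rfl | hxb'
        · -- x = e ∈ S0 b; but e ∈ S0 b only possible if b = j; and x ∈ T a means contradiction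
          exact henotT a hxa'
        · exact (hTdisj a b hab).le_bot ⟨hxa', hxb'⟩
    · ext x
      simp only [Set.mem_iUnion, Set.union_singleton, Set.mem_insert_iff]
      constructor
      · rintro ⟨k, hk⟩
        rcases hsub k hk with rfl | h
        · exact Or.inl rfl
        · exact Or.inr ⟨k, h⟩
      · rintro (rfl | ⟨k, hk⟩)
        · exact ⟨j, by rw [hS0j]; exact Or.inl rfl⟩
        · by_cases h : k = j
          · exact ⟨j, by rw [hS0j]; exact Or.inr (h ▸ hk)⟩
          · exact ⟨k, by rw [hS0k k h]; exact hk⟩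
    · rw [pow_zero, Finset.sum_eq_single j]
      · rw [hS0j]
        have hins : insert e (T j) \ T j = {e} := by
          ext x
          constructor
          · rintro ⟨rfl | h, hn⟩
            · rfl
            · exact absurd h hn
          · rintro rfl
            exact ⟨Or.inl rfl, henotT j⟩
        rw [hins, Set.ncard_singleton]
      · intro k _ hk
        rw [hS0k k hk, Set.diff_self, Set.ncard_empty]
      · intro h
        exact absurd (Finset.mem_univ j) h
    · rw [pow_zero]
      refine le_trans (Set.ncard_le_ncard ?_ (Set.finite_singleton j)) ?_
      · intro k hk
        simp only [Set.mem_setOf_eq] at hk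
        by_contra h
        exact hk (hS0k k h)
      · simp
  | succ i ih =>
    intro hl T hTri hTdisj e he heT j hj
    classical
    have hpow : (3:ℕ) ^ (i+1) = 3 ^ i * 3 := pow_succ 3 i
    set R : Fin m → Set α := reduce M c ℓ T with hRdef
    have hRsub : ∀ k, R k ⊆ T k := fun k x hx => hx.1
    have hTfin : ∀ k, (T k).Finite := fun k => M.set_finite _ (hTri k).1.subset_ground
    have hRri : ∀ k, RainbowIndep M c (R k) := fun k => (hTri k).subset (hRsub k)
    have hRdisj : ∀ a b, a ≠ b → Disjoint (R a) (R b) :=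
      fun a b hab => (hTdisj a b hab).mono (hRsub a) (hRsub b)
    have heR : e ∉ ⋃ k, R k := fun h => heT (Set.iUnion_mono hRsub h)
    have hl' : 3 ^ i ≤ ℓ :=
      le_trans (Nat.pow_le_pow_right (by norm_num) (Nat.le_succ i)) hl
    have hj' : RainbowIndep M c (insert e ((reduce M c ℓ)^[i] R j)) := by
      rwa [hRdef, ← Function.iterate_succ_apply]
    obtain ⟨S', hS'ri, hS'disj, hS'union, hS'sum, hS'chg⟩ :=
      ih hl' R hRri hRdisj e he heR j hj'
    set D : Fin m → Set α := fun k => T k \ R k with hDdef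
    have hDfin : ∀ k, (D k).Finite := fun k => (hTfin k).subset diff_subset
    have hS'fin : ∀ k, (S' k).Finite := fun k => M.set_finite _ (hS'ri k).1.subset_ground
    have henotT : ∀ k, e ∉ T k := fun k hk => heT (Set.mem_iUnion.2 ⟨k, hk⟩)
    have hS'D : ∀ k k', Disjoint (S' k) (D k') := by
      intro k k'
      rw [Set.disjoint_left]
      intro x hx hxD
      have hxU : x ∈ (⋃ k, R k) ∪ {e} := hS'union ▸ Set.mem_iUnion.2 ⟨k, hx⟩
      rcases hxU with hxR | hxe
      · obtain ⟨k'', hk''⟩ := Set.mem_iUnion.1 hxR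
        by_cases h : k'' = k'
        · exact hxD.2 (h ▸ hk'')
        · exact (hTdisj k'' k' h).le_bot ⟨hRsub k'' hk'', hxD.1⟩
      · rw [Set.mem_singleton_iff] at hxe
        exact henotT k' (hxe ▸ hxD.1)
    have hrep : ∀ k, ∃ B : Set α, S' k ⊆ B ∧ B ⊆ S' k ∪ D k ∧ RainbowIndep M c B ∧
        ((S' k ∪ D k) \ B).ncard ≤ 2 * (S' k \ R k).ncard :=
      fun k => repair M c (T k) (R k) (S' k) (hTri k) (hRsub k) (hS'ri k) (hS'D k k)
    choose B hB1 hB2 hB3 hB4 using hrep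
    set E : Fin m → Set α := fun k => (S' k ∪ D k) \ B k with hEdef
    have hEDk : ∀ k, E k ⊆ D k := by
      intro k x hx
      rcases hx.1 with h | h
      · exact absurd (hB1 k h) hx.2
      · exact h
    have hEfin : ∀ k, (E k).Finite := fun k => (hDfin k).subset (hEDk k)
    set Etot : Set α := ⋃ k, E k with hEtotdef
    have hEtotfin : Etot.Finite := Set.finite_iUnion hEfin
    have hEtotcard : Etot.ncard ≤ 2 * 3 ^ i := by
      calc Etot.ncard ≤ ∑ k, (E k).ncard := ncard_iUnion_le'' E
        _ ≤ ∑ k, 2 * (S' k \ R k).ncard := Finset.sum_le_sum (fun k _ => hB4 k)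
        _ = 2 * ∑ k, (S' k \ R k).ncard := (Finset.mul_sum _ _ _).symm
        _ ≤ 2 * 3 ^ i := by omega
    set K' : Set (Fin m) := {k | S' k ≠ R k} with hK'def
    have hK'fin : K'.Finite := Set.toFinite _
    set Cand : α → Set (Fin m) :=
      fun x => {k | x ∉ T k ∧ RainbowIndep M c (insert x (T k))} with hCanddef
    have hCandcard : ∀ x ∈ Etot, ℓ ≤ (Cand x).ncard := by
      intro x hx
      obtain ⟨k, hk⟩ := Set.mem_iUnion.1 hx
      have hxD : x ∈ D k := hEDk k hk
      have hxnR : x ∉ R k := hxD.2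
      by_contra hcon
      push_neg at hcon
      exact hxnR ⟨hxD.1, hcon⟩
    -- Hall's theorem
    haveI : Fintype Etot := hEtotfin.fintype
    set tF : Etot → Finset (Fin m) :=
      fun x => ((Cand x.1 \ K').toFinite.toFinset) with htFdef
    have htFcard : ∀ x : Etot, 2 * 3 ^ i ≤ (tF x).card := by
      intro x
      have hc1 : ℓ ≤ (Cand x.1).ncard := hCandcard x.1 x.2
      have hdiff : (Cand x.1).ncard ≤ (Cand x.1 \ K').ncard + K'.ncard :=
        Set.ncard_le_ncard_diff_add_ncard _ _ hK'fin
      have heq : (tF x).card = (Cand x.1 \ K').ncard :=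
        (Set.ncard_eq_toFinset_card _ _).symm
      omega
    have hhall : ∀ s : Finset Etot, s.card ≤ (s.biUnion tF).card := by
      intro s
      rcases Finset.eq_empty_or_nonempty s with rfl | ⟨x, hx⟩
      · simp
      · have h1 : s.card ≤ 2 * 3 ^ i := by
          have h2 : s.card ≤ Fintype.card Etot := Finset.card_le_univ s
          have h3 : Fintype.card Etot = Etot.ncard := by
            rw [Set.ncard_eq_toFinset_card', Set.toFinset_card]
          omega
        exact le_trans (le_trans h1 (htFcard x))
          (Finset.card_le_card (Finset.subset_biUnion_of_mem tF hx))
    obtain ⟨f, hfinj, hf⟩ := (Finset.all_card_le_biUnion_card_iff_exists_injective tF).1 hhall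
    have hfmem : ∀ x : Etot, f x ∈ Cand x.1 \ K' := by
      intro x
      have := hf x
      rwa [Set.Finite.mem_toFinset] at this
    set A : Fin m → Set α := fun k => {x : α | ∃ h : x ∈ Etot, f ⟨x, h⟩ = k} with hAdef
    have hAsubE : ∀ k, A k ⊆ Etot := fun k x hx => hx.1
    have hAfin : ∀ k, (A k).Finite := fun k => hEtotfin.subset (hAsubE k)
    have hAprop : ∀ k x, x ∈ A k → k ∈ Cand x ∧ k ∉ K' := by
      rintro k x ⟨hmem, hfx⟩
      have := hfmem ⟨x, hmem⟩
      exact ⟨hfx ▸ this.1, hfx ▸ this.2⟩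
    have hAdisj : ∀ a b, a ≠ b → Disjoint (A a) (A b) := by
      intro a b hab
      rw [Set.disjoint_left]
      rintro x ⟨h1, e1⟩ ⟨h2, e2⟩
      exact hab (e1 ▸ e2 ▸ rfl)
    have hAsingle : ∀ k x y, x ∈ A k → y ∈ A k → x = y := by
      rintro k x y ⟨h1, e1⟩ ⟨h2, e2⟩
      have : f ⟨x, h1⟩ = f ⟨y, h2⟩ := e1.trans e2.symm
      exact congrArg Subtype.val (hfinj this)
    have hBTk : ∀ k, k ∉ K' → B k = T k := by
      intro k hk
      rw [hK'def, Set.mem_setOf_eq, not_not] at hk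
      have hY0 : (S' k \ R k).ncard = 0 := by rw [hk, Set.diff_self, Set.ncard_empty]
      have hE0 : E k = ∅ := by
        have h := hB4 k
        rw [hY0, Nat.mul_zero, Nat.le_zero, Set.ncard_eq_zero (hEfin k)] at h
        exact h
      have h2 : S' k ∪ D k ⊆ B k := by
        rw [← Set.diff_eq_empty]
        exact hE0
      have h3 : B k = S' k ∪ D k := le_antisymm (hB2 k) h2
      rw [h3, hk, Set.union_diff_cancel (hRsub k)]
    set SS : Fin m → Set α := fun k => B k ∪ A k with hSSdef
    have hBfin : ∀ k, (B k).Finite := fun k => ((hS'fin k).union (hDfin k)).subset (hB2 k)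
    -- x in some A-set is in some E-set and not in the corresponding B
    have hAE : ∀ b x, x ∈ A b → ∃ k₀, x ∈ D k₀ ∧ x ∉ B k₀ := by
      rintro b x ⟨hmem, -⟩
      obtain ⟨k₀, hk₀⟩ := Set.mem_iUnion.1 hmem
      exact ⟨k₀, hEDk k₀ hk₀, hk₀.2⟩
    have hAB : ∀ a b x, x ∈ A b → x ∈ B a → False := by
      intro a b x hxA hxB
      obtain ⟨k₀, hxD, hxnB⟩ := hAE b x hxA
      rcases hB2 a hxB with h | h
      · exact (hS'D a k₀).le_bot ⟨h, hxD⟩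
      · by_cases hak : a = k₀
        · exact hxnB (hak ▸ hxB)
        · exact (hTdisj a k₀ hak).le_bot ⟨h.1, hxD.1⟩
    refine ⟨SS, ?_, ?_, ?_, ?_, ?_⟩
    · -- rainbow independence
      intro k
      rcases Set.eq_empty_or_nonempty (A k) with hAk | ⟨x₀, hx₀⟩
      · have : SS k = B k := by rw [hSSdef]; simp [hAk]
        rw [this]; exact hB3 k
      · have hcand := hAprop k x₀ hx₀
        have hAk : A k = {x₀} := by
          apply Set.eq_singleton_iff_unique_mem.2
          exact ⟨hx₀, fun y hy => hAsingle k y x₀ hy hx₀⟩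
        have : SS k = insert x₀ (T k) := by
          rw [hSSdef]
          show B k ∪ A k = _
          rw [hAk, hBTk k hcand.2, Set.union_singleton]
        rw [this]
        exact hcand.1.2
    · -- disjointness
      intro a b hab
      rw [Set.disjoint_left]
      rintro x (hxa | hxa) (hxb | hxb)
      · rcases hB2 a hxa with h1 | h1 <;> rcases hB2 b hxb with h2 | h2
        · exact (hS'disj a b hab).le_bot ⟨h1, h2⟩
        · exact (hS'D a b).le_bot ⟨h1, h2⟩
        · exact (hS'D b a).le_bot ⟨h2, h1⟩
        · exact (hTdisj a b hab).le_bot ⟨h1.1, h2.1⟩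
      · exact hAB a b x hxb hxa
      · exact hAB b a x hxa hxb
      · exact (hAdisj a b hab).le_bot ⟨hxa, hxb⟩
    · -- union
      have hAEtot : ⋃ k, A k = Etot := by
        apply le_antisymm
        · exact Set.iUnion_subset hAsubE
        · intro x hx
          exact Set.mem_iUnion.2 ⟨f ⟨x, hx⟩, ⟨hx, rfl⟩⟩
      apply le_antisymm
      · intro x hx
        obtain ⟨k, hk⟩ := Set.mem_iUnion.1 hx
        rcases hk with hk | hk
        · rcases hB2 k hk with h | h
          · have : x ∈ (⋃ k, R k) ∪ {e} := hS'union ▸ Set.mem_iUnion.2 ⟨k, h⟩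
            rcases this with h' | h'
            · obtain ⟨k', hk'⟩ := Set.mem_iUnion.1 h'
              exact Or.inl (Set.mem_iUnion.2 ⟨k', hRsub k' hk'⟩)
            · exact Or.inr h'
          · exact Or.inl (Set.mem_iUnion.2 ⟨k, h.1⟩)
        · obtain ⟨k₀, hxD, -⟩ := hAE k x hk
          exact Or.inl (Set.mem_iUnion.2 ⟨k₀, hxD.1⟩)
      · rintro x (hx | hx)
        · obtain ⟨k, hk⟩ := Set.mem_iUnion.1 hx
          by_cases hxR : x ∈ R k
          · have : x ∈ ⋃ k, S' k := hS'union.symm ▸ Or.inl (Set.mem_iUnion.2 ⟨k, hxR⟩)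
            obtain ⟨k', hk'⟩ := Set.mem_iUnion.1 this
            exact Set.mem_iUnion.2 ⟨k', Or.inl (hB1 k' hk')⟩
          · by_cases hxB : x ∈ B k
            · exact Set.mem_iUnion.2 ⟨k, Or.inl hxB⟩
            · have hxE : x ∈ E k := ⟨Or.inr ⟨hk, hxR⟩, hxB⟩
              have hxEtot : x ∈ Etot := Set.mem_iUnion.2 ⟨k, hxE⟩
              have : x ∈ ⋃ k, A k := hAEtot.symm ▸ hxEtot
              obtain ⟨k', hk'⟩ := Set.mem_iUnion.1 this
              exact Set.mem_iUnion.2 ⟨k', Or.inr hk'⟩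
        · rw [Set.mem_singleton_iff] at hx
          subst hx
          have hxS : x ∈ ⋃ k, S' k := by rw [hS'union]; exact Or.inr rfl
          obtain ⟨k, hk⟩ := Set.mem_iUnion.1 hxS
          exact Set.mem_iUnion.2 ⟨k, Or.inl (hB1 k hk)⟩
    · -- sum bound
      have hperk : ∀ k, (SS k \ T k).ncard ≤ (S' k \ R k).ncard + (A k).ncard := by
        intro k
        have hsub : SS k \ T k ⊆ (S' k \ R k) ∪ A k := by
          rintro x ⟨hx | hx, hxT⟩
          · rcases hB2 k hx with h | h
            · exact Or.inl ⟨h, fun hc => hxT (hRsub k hc)⟩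
            · exact absurd h.1 hxT
          · exact Or.inr hx
        calc (SS k \ T k).ncard ≤ ((S' k \ R k) ∪ A k).ncard :=
              Set.ncard_le_ncard hsub (((hS'fin k).subset diff_subset).union (hAfin k))
          _ ≤ (S' k \ R k).ncard + (A k).ncard := Set.ncard_union_le _ _
      have hAsum : ∑ k, (A k).ncard ≤ 2 * 3 ^ i := by
        calc ∑ k, (A k).ncard ≤ (⋃ k, A k).ncard :=
              sum_ncard_le_ncard_iUnion'' A hAfin hAdisj
          _ ≤ Etot.ncard := Set.ncard_le_ncard (Set.iUnion_subset hAsubE) hEtotfin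
          _ ≤ 2 * 3 ^ i := hEtotcard
      calc ∑ k, (SS k \ T k).ncard ≤ ∑ k, ((S' k \ R k).ncard + (A k).ncard) :=
            Finset.sum_le_sum (fun k _ => hperk k)
        _ = (∑ k, (S' k \ R k).ncard) + ∑ k, (A k).ncard := Finset.sum_add_distrib
        _ ≤ 3 ^ i + 2 * 3 ^ i := add_le_add hS'sum hAsum
        _ ≤ 3 ^ (i+1) := by omega
    · -- changed set bound
      have hchgsub : {k | SS k ≠ T k} ⊆ K' ∪ {k | (A k).Nonempty} := by
        intro k hk
        by_contra hcon
        rw [Set.mem_union] at hcon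
        push_neg at hcon
        obtain ⟨h1, h2⟩ := hcon
        have hAk : A k = ∅ := Set.not_nonempty_iff_eq_empty.1 h2
        exact hk (by rw [hSSdef]; show B k ∪ A k = T k; rw [hAk, Set.union_empty, hBTk k h1])
      have hne : {k | (A k).Nonempty}.ncard ≤ 2 * 3 ^ i := by
        have hmap : ∀ k ∈ {k | (A k).Nonempty},
            (if h : (A k).Nonempty then h.choose else e) ∈ Etot := by
          intro k hk
          have hk' : (A k).Nonempty := hk
          rw [dif_pos hk']
          exact hAsubE k hk'.choose_spec
        have hinj : Set.InjOn (fun k => if h : (A k).Nonempty then h.choose else e)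
            {k | (A k).Nonempty} := by
          intro a ha b hb hfab
          have ha' : (A a).Nonempty := ha
          have hb' : (A b).Nonempty := hb
          have hfab' : (if h : (A a).Nonempty then h.choose else e)
              = (if h : (A b).Nonempty then h.choose else e) := hfab
          rw [dif_pos ha', dif_pos hb'] at hfab'
          by_contra hne'
          exact (hAdisj a b hne').le_bot
            ⟨ha'.choose_spec, by rw [hfab']; exact hb'.choose_spec⟩
        calc {k | (A k).Nonempty}.ncard ≤ Etot.ncard :=
              Set.ncard_le_ncard_of_injOn _ hmap hinj hEtotfin
          _ ≤ 2 * 3 ^ i := hEtotcard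
      calc {k | SS k ≠ T k}.ncard ≤ (K' ∪ {k | (A k).Nonempty}).ncard :=
            Set.ncard_le_ncard hchgsub ((Set.toFinite _))
        _ ≤ K'.ncard + {k | (A k).Nonempty}.ncard := Set.ncard_union_le _ _
        _ ≤ 3 ^ i + 2 * 3 ^ i := add_le_add hS'chg hne
        _ ≤ 3 ^ (i+1) := by omega

theorem stmt12 {α κ : Type*} (M : Matroid α) [M.Finite] (c : α → κ)
    (r ℓ m : ℕ) (hℓ : 3 ^ r < ℓ)
    (T : Fin m → Set α)
    (hTri : ∀ j, RainbowIndep M c (T j))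
    (hTdisj : ∀ i j, i ≠ j → Disjoint (T i) (T j))
    (TT : ℕ → Fin m → Set α)
    (hTT0 : TT 0 = T)
    (hTTsucc : ∀ i < r, TT (i + 1) = reduce M c ℓ (TT i))
    (e : α) (he : e ∈ M.E) (heT : e ∉ ⋃ j, T j)
    (hgood : ∃ i ≤ r, ∃ j, RainbowIndep M c (insert e (TT i j))) :
    ∃ S : Fin m → Set α, (∀ j, RainbowIndep M c (S j)) ∧
      (∀ i j, i ≠ j → Disjoint (S i) (S j)) ∧
      (⋃ j, S j) = (⋃ j, T j) ∪ {e} ∧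
      ∑ j, (S j \ T j).ncard ≤ 3 ^ r := by
  obtain ⟨i, hir, j, hij⟩ := hgood
  have hTTi : ∀ n, n ≤ r → TT n = (reduce M c ℓ)^[n] T := by
    intro n
    induction n with
    | zero => intro _; simpa using hTT0
    | succ n ihn =>
      intro hn
      have hn' : n < r := hn
      rw [hTTsucc n hn', ihn (le_of_lt hn')]
      exact (Function.iterate_succ_apply' (reduce M c ℓ) n T).symm
  rw [hTTi i hir] at hij
  have hl : 3 ^ i ≤ ℓ :=
    le_trans (Nat.pow_le_pow_right (by norm_num) hir) (le_of_lt hℓ)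
  obtain ⟨S, h1, h2, h3, h4, -⟩ := key M c ℓ i hl T hTri hTdisj e he heT j hij
  exact ⟨S, h1, h2, h3, le_trans h4 (Nat.pow_le_pow_right (by norm_num) hir)⟩
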